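/- Suppose p : (0,M) → ℝ is continuous, bounded, and satisfies for every x ∈ (0,M): p(x) = ∫_x^M (D/g(S,y)) e^{−∫_x^y (b(S,z)+D)/g(S,z) dz} dy + ∫_x^M (b(S,y)/g(S,y)) e^{−∫_x^y (b(S,z)+D)/g(S,z) dz} (∫_0^1 q(y,α) p(αy) p((1−α)y) dα) dy. Assume Assumption (H1) holds. Then p is differentiable on (0,M) and satisfies the equation g(S,x) p'(x) + D(1 − p(x)) + b(S,x)(∫_0^1 q(x,α) p(αx) p((1−α)x) dα − p(x)) = 0 for all x ∈ (0,M). -/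

import Mathlib

open MeasureTheory Set Filter

/-- Cumulative distribution function `F_x(u) = ∫_0^u q(x,α) dα` associated to a
division kernel. -/
noncomputable def cdf (q : ℝ → ℝ → ℝ) (x u : ℝ) : ℝ := ∫ α in (0:ℝ)..u, q x α

/-- Generalized inverse `F_x^{-1}(v) = inf {u ∈ [0,1] : F_x(u) ≥ v}`. -/
noncomputable def cdfInv (q : ℝ → ℝ → ℝ) (x v : ℝ) : ℝ :=
  sInf {u ∈ Set.Icc (0:ℝ) 1 | v ≤ cdf q x u}

/-- A division kernel on `[0,M]`: measurable, nonnegative, a probability density in the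
second variable, symmetric with respect to `1/2`. -/
def IsDivisionKernel (M : ℝ) (q : ℝ → ℝ → ℝ) : Prop :=
  Measurable (Function.uncurry q) ∧
  (∀ x ∈ Set.Icc (0:ℝ) M, ∀ α ∈ Set.Icc (0:ℝ) 1, 0 ≤ q x α) ∧
  (∀ x ∈ Set.Icc (0:ℝ) M, (∫ α in (0:ℝ)..1, q x α) = 1) ∧
  (∀ x ∈ Set.Icc (0:ℝ) M, ∀ α ∈ Set.Icc (0:ℝ) 1, q x α = q x (1 - α))

/-- Assumption (Q): for all `u ∈ (0,1)` and `0 ≤ x ≤ y ≤ M`,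
`x·F_x^{-1}(u) ≤ y·F_y^{-1}(u)` and `x·(1 − F_x^{-1}(u)) ≤ y·(1 − F_y^{-1}(u))`. -/
def AssumptionQ (M : ℝ) (q : ℝ → ℝ → ℝ) : Prop :=
  ∀ u ∈ Set.Ioo (0:ℝ) 1, ∀ x y : ℝ, 0 ≤ x → x ≤ y → y ≤ M →
    x * cdfInv q x u ≤ y * cdfInv q y u ∧
    x * (1 - cdfInv q x u) ≤ y * (1 - cdfInv q y u)

/-- Assumption (H1): for each `α ∈ [0,1]`, `x ↦ q(x,α)` is continuous on `[0,M]`; `q` is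
dominated by an integrable `q̄`; and there exist `m_div ∈ [0,M)` and `b̄ > 0` such that
`b = 0` on `[0, m_div]` and `0 < b ≤ b̄` on `(m_div, M)`. -/
def AssumptionH1 (M : ℝ) (q : ℝ → ℝ → ℝ) (b : ℝ → ℝ) : Prop :=
  (∀ α ∈ Set.Icc (0:ℝ) 1, ContinuousOn (fun x => q x α) (Set.Icc 0 M)) ∧
  (∃ qbar : ℝ → ℝ, MeasureTheory.IntegrableOn qbar (Set.Icc 0 1) ∧
    ∀ x ∈ Set.Icc (0:ℝ) M, ∀ α ∈ Set.Icc (0:ℝ) 1, q x α ≤ qbar α) ∧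
  (∃ mdiv ∈ Set.Ico (0:ℝ) M, ∃ bbar : ℝ, 0 < bbar ∧
    (∀ x ∈ Set.Icc (0:ℝ) M, x ≤ mdiv → b x = 0) ∧
    (∀ x ∈ Set.Ioo mdiv M, 0 < b x ∧ b x ≤ bbar))
/-- A continuous bounded solution of the integral form of the extinction-probability
equation is differentiable on `(0,M)` and satisfies
`g(S,x) p'(x) + D(1 − p(x)) + b(S,x)(∫_0^1 q(x,α)p(αx)p((1−α)x)dα − p(x)) = 0`. -/
theorem statement6 (M D : ℝ) (hM : 0 < M) (hD : 0 < D)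
    (q : ℝ → ℝ → ℝ) (hq : IsDivisionKernel M q)
    (b g : ℝ → ℝ)
    (hb_cont : ContinuousOn b (Set.Icc 0 M))
    (hb_nonneg : ∀ x ∈ Set.Icc (0:ℝ) M, 0 ≤ b x)
    (hg_cont : ContinuousOn g (Set.Icc 0 M))
    (hg_diff : ContDiffOn ℝ 1 g (Set.Ioo 0 M))
    (hg0 : g 0 = 0) (hgM : g M = 0)
    (hg_pos : ∀ x ∈ Set.Ioo (0:ℝ) M, 0 < g x)
    (hH1 : AssumptionH1 M q b)
    (p : ℝ → ℝ)
    (hp_cont : ContinuousOn p (Set.Ioo 0 M))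
    (hp_bdd : ∃ C : ℝ, ∀ x ∈ Set.Ioo (0:ℝ) M, |p x| ≤ C)
    (hp_eq : ∀ x ∈ Set.Ioo (0:ℝ) M,
      p x = (∫ y in x..M, D / g y * Real.exp (-(∫ z in x..y, (b z + D) / g z)))
        + ∫ y in x..M, b y / g y * Real.exp (-(∫ z in x..y, (b z + D) / g z)) *
            ∫ α in (0:ℝ)..1, q y α * p (α * y) * p ((1 - α) * y)) :
    ∀ x ∈ Set.Ioo (0:ℝ) M,
      DifferentiableAt ℝ p x ∧
      g x * deriv p x + D * (1 - p x)
        + b x * ((∫ α in (0:ℝ)..1, q x α * p (α * x) * p ((1 - α) * x)) - p x) = 0 := by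

  classical
  obtain ⟨hq_meas, hq_nonneg, hq_int, hq_symm⟩ := hq
  obtain ⟨hq_cont, ⟨qbar, hqbar_int, hqbar_le⟩, -⟩ := hH1
  obtain ⟨C, hC⟩ := hp_bdd
  have hC0 : 0 ≤ C := le_trans (abs_nonneg _) (hC (M/2) ⟨by linarith, by linarith⟩)
  set Q : ℝ → ℝ := fun y => ∫ α in (0:ℝ)..1, q y α * p (α * y) * p ((1 - α) * y) with hQdef
  have hne1 : ∀ᵐ α : ℝ, α ≠ (1:ℝ) := by
    have : (volume : Measure ℝ) {(1:ℝ)} = 0 := measure_singleton 1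
    exact (ae_iff).2 (by simpa using this)
  have hqbar_nonneg : ∀ α ∈ Set.Icc (0:ℝ) 1, 0 ≤ qbar α := fun α hα =>
    le_trans (hq_nonneg 0 ⟨le_refl 0, hM.le⟩ α hα) (hqbar_le 0 ⟨le_refl 0, hM.le⟩ α hα)
  -- restricted measures agree
  have hres : (volume : Measure ℝ).restrict (Set.Ioc (0:ℝ) 1)
      = (volume : Measure ℝ).restrict (Set.Ioo (0:ℝ) 1) :=
    (Measure.restrict_congr_set Ioo_ae_eq_Ioc).symm
  have hmul_mem : ∀ y ∈ Set.Ioo (0:ℝ) M, ∀ α ∈ Set.Ioo (0:ℝ) 1,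
      α * y ∈ Set.Ioo (0:ℝ) M := by
    intro y hy α hα
    constructor
    · exact mul_pos hα.1 hy.1
    · calc α * y < 1 * y := by nlinarith [hy.1, hα.2]
        _ = y := one_mul y
        _ < M := hy.2
  have haem : ∀ y ∈ Set.Ioo (0:ℝ) M, AEStronglyMeasurable
      (fun α => q y α * p (α * y) * p ((1 - α) * y))
      ((volume : Measure ℝ).restrict (Set.Ioc (0:ℝ) 1)) := by
    intro y hy
    rw [hres]
    have h1 : AEStronglyMeasurable (fun α => q y α)
        ((volume : Measure ℝ).restrict (Set.Ioo (0:ℝ) 1)) :=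
      ((hq_meas.comp (measurable_const.prodMk measurable_id)).aestronglyMeasurable)
    have h2 : AEStronglyMeasurable (fun α => p (α * y))
        ((volume : Measure ℝ).restrict (Set.Ioo (0:ℝ) 1)) := by
      apply ContinuousOn.aestronglyMeasurable _ measurableSet_Ioo
      apply hp_cont.comp ((continuous_id.mul continuous_const).continuousOn)
      intro α hα; exact hmul_mem y hy α hα
    have h3 : AEStronglyMeasurable (fun α => p ((1 - α) * y))
        ((volume : Measure ℝ).restrict (Set.Ioo (0:ℝ) 1)) := by
      apply ContinuousOn.aestronglyMeasurable _ measurableSet_Ioo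
      apply hp_cont.comp (((continuous_const.sub continuous_id).mul continuous_const).continuousOn)
      intro α hα
      exact hmul_mem y hy (1 - α) ⟨by linarith [hα.2], by linarith [hα.1]⟩
    exact (h1.mul h2).mul h3
  have hbound : ∀ y ∈ Set.Ioo (0:ℝ) M, ∀ᵐ α : ℝ, α ∈ Set.Ioc (0:ℝ) 1 →
      ‖q y α * p (α * y) * p ((1 - α) * y)‖ ≤ qbar α * (C * C) := by
    intro y hy
    filter_upwards [hne1] with α hα1 hα
    have hαo : α ∈ Set.Ioo (0:ℝ) 1 := ⟨hα.1, lt_of_le_of_ne hα.2 hα1⟩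
    have hq1 : |q y α| ≤ qbar α := by
      rw [abs_of_nonneg (hq_nonneg y (Set.Ioo_subset_Icc_self hy) α
        (Set.Ioo_subset_Icc_self hαo))]
      exact hqbar_le y (Set.Ioo_subset_Icc_self hy) α (Set.Ioo_subset_Icc_self hαo)
    have hp1 : |p (α * y)| ≤ C := hC _ (hmul_mem y hy α hαo)
    have hp2 : |p ((1 - α) * y)| ≤ C :=
      hC _ (hmul_mem y hy (1 - α) ⟨by linarith [hαo.2], by linarith [hαo.1]⟩)
    calc ‖q y α * p (α * y) * p ((1 - α) * y)‖
        = |q y α| * |p (α * y)| * |p ((1 - α) * y)| := by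
          simp [Real.norm_eq_abs, abs_mul]
      _ ≤ qbar α * C * C := by
          apply mul_le_mul (mul_le_mul hq1 hp1 (abs_nonneg _)
            (le_trans (abs_nonneg _) hq1)) hp2 (abs_nonneg _)
          exact mul_nonneg (hqbar_nonneg α ⟨hαo.1.le, hαo.2.le⟩) hC0
      _ = qbar α * (C * C) := by ring
  have hqbar_ii : IntervalIntegrable (fun α => qbar α * (C * C)) volume 0 1 := by
    rw [intervalIntegrable_iff_integrableOn_Ioc_of_le (by norm_num : (0:ℝ) ≤ 1)]
    exact (hqbar_int.mono_set Set.Ioc_subset_Icc_self).mul_const _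
  have hQcont : ContinuousOn Q (Set.Ioo 0 M) := by
    intro y₀ hy₀
    apply ContinuousAt.continuousWithinAt
    apply intervalIntegral.continuousAt_of_dominated_interval
      (bound := fun α => qbar α * (C * C))
    · filter_upwards [isOpen_Ioo.mem_nhds hy₀] with y hy
      simpa [Set.uIoc_of_le (by norm_num : (0:ℝ) ≤ 1)] using haem y hy
    · filter_upwards [isOpen_Ioo.mem_nhds hy₀] with y hy
      simpa [Set.uIoc_of_le (by norm_num : (0:ℝ) ≤ 1)] using hbound y hy
    · exact hqbar_ii
    · filter_upwards [hne1] with α hα1 hα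
      rw [Set.uIoc_of_le (by norm_num : (0:ℝ) ≤ 1)] at hα
      have hαo : α ∈ Set.Ioo (0:ℝ) 1 := ⟨hα.1, lt_of_le_of_ne hα.2 hα1⟩
      have c1 : ContinuousAt (fun y => q y α) y₀ :=
        (hq_cont α (Set.Ioo_subset_Icc_self hαo)).continuousAt
          (Icc_mem_nhds hy₀.1 hy₀.2)
      have c2 : ContinuousAt (fun y => p (α * y)) y₀ := by
        have : ContinuousAt p (α * y₀) :=
          hp_cont.continuousAt (isOpen_Ioo.mem_nhds (hmul_mem y₀ hy₀ α hαo))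
        exact this.comp ((continuous_const.mul continuous_id).continuousAt)
      have c3 : ContinuousAt (fun y => p ((1 - α) * y)) y₀ := by
        have : ContinuousAt p ((1 - α) * y₀) :=
          hp_cont.continuousAt (isOpen_Ioo.mem_nhds
            (hmul_mem y₀ hy₀ (1 - α) ⟨by linarith [hαo.2], by linarith [hαo.1]⟩))
        exact this.comp ((continuous_const.mul continuous_id).continuousAt)
      exact (c1.mul c2).mul c3
  set B : ℝ := |∫ α in (0:ℝ)..1, qbar α * (C * C)| with hBdef
  have hB0 : 0 ≤ B := abs_nonneg _
  have hQbdd : ∀ y ∈ Set.Ioo (0:ℝ) M, |Q y| ≤ B := by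
    intro y hy
    refine intervalIntegral.norm_integral_le_abs_of_norm_le
      (f := fun α => q y α * p (α * y) * p ((1 - α) * y)) ?_ hqbar_ii
    filter_upwards [ae_restrict_of_ae (hbound y hy), ae_restrict_mem measurableSet_uIoc]
      with α h1 h2
    exact h1 (by rwa [Set.uIoc_of_le (by norm_num : (0:ℝ) ≤ 1)] at h2)
  have hg_ne : ∀ z ∈ Set.Ioo (0:ℝ) M, g z ≠ 0 := fun z hz => (hg_pos z hz).ne'
  intro x hx
  set h' : ℝ → ℝ := fun z => (b z + D) / g z with hh'def
  set H : ℝ → ℝ := fun y => ∫ z in x..y, h' z with hHdef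
  have hh_cont : ContinuousOn h' (Set.Ioo 0 M) :=
    ((hb_cont.mono Set.Ioo_subset_Icc_self).add continuousOn_const).div
      (hg_cont.mono Set.Ioo_subset_Icc_self) hg_ne
  have hsub : ∀ u ∈ Set.Ioo (0:ℝ) M, ∀ v ∈ Set.Ioo (0:ℝ) M,
      Set.uIcc u v ⊆ Set.Ioo (0:ℝ) M := fun u hu v hv =>
    (Set.ordConnected_Ioo).uIcc_subset hu hv
  have hh_int : ∀ u ∈ Set.Ioo (0:ℝ) M, ∀ v ∈ Set.Ioo (0:ℝ) M,
      IntervalIntegrable h' volume u v := fun u hu v hv =>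
    (hh_cont.mono (hsub u hu v hv)).intervalIntegrable
  have hHderiv : ∀ y ∈ Set.Ioo (0:ℝ) M, HasDerivAt H (h' y) y := fun y hy =>
    intervalIntegral.integral_hasDerivAt_right (hh_int x hx y hy)
      ((hh_cont.stronglyMeasurableAtFilter isOpen_Ioo) y hy)
      (hh_cont.continuousAt (isOpen_Ioo.mem_nhds hy))
  have hHx : H x = 0 := intervalIntegral.integral_same
  have hHsub : ∀ u ∈ Set.Ioo (0:ℝ) M, ∀ v ∈ Set.Ioo (0:ℝ) M,
      (∫ z in u..v, h' z) = H v - H u := fun u hu v hv =>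
    (intervalIntegral.integral_interval_sub_left (hh_int x hx v hv) (hh_int x hx u hu)).symm
  set G₁ : ℝ → ℝ := fun y => D / g y * Real.exp (-H y) with hG₁def
  set G₂ : ℝ → ℝ := fun y => b y / g y * Real.exp (-H y) * Q y with hG₂def
  set G₀ : ℝ → ℝ := fun y => (b y + D) / g y * Real.exp (-H y) with hG₀def
  have hHcont : ContinuousOn H (Set.Ioo 0 M) := fun y hy =>
    ((hHderiv y hy).continuousAt).continuousWithinAt
  have hexpcont : ContinuousOn (fun y => Real.exp (-H y)) (Set.Ioo 0 M) :=
    (Real.continuous_exp.comp_continuousOn hHcont.neg)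
  have hG₁cont : ContinuousOn G₁ (Set.Ioo 0 M) :=
    ((continuousOn_const.div (hg_cont.mono Set.Ioo_subset_Icc_self) hg_ne).mul hexpcont)
  have hG₂cont : ContinuousOn G₂ (Set.Ioo 0 M) :=
    (((hb_cont.mono Set.Ioo_subset_Icc_self).div
      (hg_cont.mono Set.Ioo_subset_Icc_self) hg_ne).mul hexpcont).mul hQcont
  have hG₀cont : ContinuousOn G₀ (Set.Ioo 0 M) := hh_cont.mul hexpcont
  have hG₀deriv : ∀ y ∈ Set.Ioo (0:ℝ) M,
      HasDerivAt (fun t => -Real.exp (-H t)) (G₀ y) y := by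
    intro y hy
    have h1 : HasDerivAt (fun t => Real.exp (-H t)) (Real.exp (-H y) * -h' y) y :=
      ((hHderiv y hy).neg).exp
    have := h1.neg
    convert this using 1
    show h' y * Real.exp (-H y) = -(Real.exp (-H y) * -h' y)
    ring
    all_goals rfl
  have hG₀nonneg : ∀ y ∈ Set.Ioo (0:ℝ) M, 0 ≤ G₀ y := by
    intro y hy
    apply mul_nonneg _ (Real.exp_nonneg _)
    apply div_nonneg _ (hg_pos y hy).le
    have := hb_nonneg y (Set.Ioo_subset_Icc_self hy)
    linarith
  have hG₀eq : ∀ t ∈ Set.Ico x M, (∫ y in x..t, G₀ y) = 1 - Real.exp (-H t) := by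
    intro t ht
    have htm : t ∈ Set.Ioo (0:ℝ) M := ⟨lt_of_lt_of_le hx.1 ht.1, ht.2⟩
    rw [intervalIntegral.integral_eq_sub_of_hasDerivAt
      (fun y hy => hG₀deriv y (hsub x hx t htm hy))
      ((hG₀cont.mono (hsub x hx t htm)).intervalIntegrable)]
    rw [hHx]
    simp only [neg_zero, Real.exp_zero]
    ring
  -- integrability of G₀ on Ioc x M
  have hG₀int : IntegrableOn G₀ (Set.Ioc x M) volume := by
    set bn : ℕ → ℝ := fun n => M - (M - x) / (n + 2) with hbndef
    have hbn_mem : ∀ n : ℕ, bn n ∈ Set.Ico x M := by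
      intro n
      have h2 : (0:ℝ) < (n:ℝ) + 2 := by positivity
      have h1 : (1:ℝ) ≤ (n:ℝ) + 2 := by
        have : (0:ℝ) ≤ (n:ℝ) := Nat.cast_nonneg n
        linarith
      have hMx : (0:ℝ) < M - x := by linarith [hx.2]
      have hle : (M - x) / ((n:ℝ) + 2) ≤ M - x := div_le_self hMx.le h1
      have hpos : 0 < (M - x) / ((n:ℝ) + 2) := div_pos hMx h2
      exact ⟨by rw [hbndef]; simp only; linarith, by rw [hbndef]; simp only; linarith⟩
    have hbn_tendsto : Filter.Tendsto bn Filter.atTop (nhds M) := by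
      rw [hbndef]
      have hnat : Filter.Tendsto (fun n : ℕ => (n:ℝ) + 2) Filter.atTop Filter.atTop :=
        Filter.tendsto_atTop_add_const_right _ 2 tendsto_natCast_atTop_atTop
      have : Filter.Tendsto (fun n : ℕ => (M - x) / ((n:ℝ) + 2)) Filter.atTop (nhds 0) :=
        Filter.Tendsto.div_atTop tendsto_const_nhds hnat
      have := tendsto_const_nhds.sub this (f := fun _ : ℕ => M)
      simpa using this
    have hmem' : ∀ n : ℕ, Set.Ioc x (bn n) ⊆ Set.Ioo (0:ℝ) M := by
      intro n y hy
      exact ⟨lt_trans hx.1 hy.1, lt_of_le_of_lt hy.2 (hbn_mem n).2⟩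
    have hfi : ∀ n : ℕ, IntegrableOn G₀ (Set.Ioc x (bn n)) volume := by
      intro n
      apply (ContinuousOn.integrableOn_Icc _).mono_set Set.Ioc_subset_Icc_self
      apply hG₀cont.mono
      intro y hy
      exact ⟨lt_of_lt_of_le hx.1 hy.1, lt_of_le_of_lt hy.2 (hbn_mem n).2⟩
    apply MeasureTheory.integrableOn_Ioc_of_intervalIntegral_norm_bounded_right
      (I := 1) hfi hbn_tendsto
    apply Filter.Eventually.of_forall
    intro n
    have he : ∫ y in Set.Ioc x (bn n), ‖G₀ y‖ = ∫ y in Set.Ioc x (bn n), G₀ y := by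
      apply MeasureTheory.setIntegral_congr_fun measurableSet_Ioc
      intro y hy
      exact Real.norm_of_nonneg (hG₀nonneg y (hmem' n hy))
    rw [he, ← intervalIntegral.integral_of_le (hbn_mem n).1,
      hG₀eq (bn n) (hbn_mem n)]
    have := Real.exp_nonneg (-H (bn n))
    linarith
  have hresx : (volume : Measure ℝ).restrict (Set.Ioc x M)
      = (volume : Measure ℝ).restrict (Set.Ioo x M) :=
    (Measure.restrict_congr_set Ioo_ae_eq_Ioc).symm
  have hIooxM : Set.Ioo x M ⊆ Set.Ioo (0:ℝ) M := fun y hy => ⟨lt_trans hx.1 hy.1, hy.2⟩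
  have haemG : ∀ G : ℝ → ℝ, ContinuousOn G (Set.Ioo 0 M) →
      AEStronglyMeasurable G ((volume : Measure ℝ).restrict (Set.Ioc x M)) := by
    intro G hG
    rw [hresx]
    exact (hG.mono hIooxM).aestronglyMeasurable measurableSet_Ioo
  have haeIoo : ∀ᵐ y ∂(volume : Measure ℝ).restrict (Set.Ioc x M), y ∈ Set.Ioo x M := by
    rw [hresx]
    exact ae_restrict_mem measurableSet_Ioo
  have hG₁int : IntegrableOn G₁ (Set.Ioc x M) volume := by
    apply MeasureTheory.Integrable.mono hG₀int (haemG G₁ hG₁cont)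
    filter_upwards [haeIoo] with y hy
    have hyM := hIooxM hy
    have hgy := hg_pos y hyM
    have hby := hb_nonneg y (Set.Ioo_subset_Icc_self hyM)
    rw [Real.norm_of_nonneg (by positivity : (0:ℝ) ≤ D / g y * Real.exp (-H y)),
      Real.norm_of_nonneg (hG₀nonneg y hyM)]
    apply mul_le_mul_of_nonneg_right _ (Real.exp_nonneg _)
    gcongr
    linarith
  have hG₂int : IntegrableOn G₂ (Set.Ioc x M) volume := by
    apply MeasureTheory.Integrable.mono (hG₀int.const_mul B) (haemG G₂ hG₂cont)
    filter_upwards [haeIoo] with y hy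
    have hyM := hIooxM hy
    have hgy := hg_pos y hyM
    have hby := hb_nonneg y (Set.Ioo_subset_Icc_self hyM)
    have hG₀y := hG₀nonneg y hyM
    rw [Real.norm_of_nonneg (by positivity : (0:ℝ) ≤ B * G₀ y)]
    calc ‖b y / g y * Real.exp (-H y) * Q y‖
        = b y / g y * Real.exp (-H y) * |Q y| := by
          rw [Real.norm_eq_abs, abs_mul, abs_of_nonneg (by positivity)]
      _ ≤ (b y + D) / g y * Real.exp (-H y) * B := by
          apply mul_le_mul _ (hQbdd y hyM) (abs_nonneg _) (by positivity)
          apply mul_le_mul_of_nonneg_right _ (Real.exp_nonneg _)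
          gcongr
          linarith
      _ = B * G₀ y := by rw [hG₀def]; ring
  have hG₁ii : IntervalIntegrable G₁ volume x M :=
    (intervalIntegrable_iff_integrableOn_Ioc_of_le hx.2.le).mpr hG₁int
  have hG₂ii : IntervalIntegrable G₂ volume x M :=
    (intervalIntegrable_iff_integrableOn_Ioc_of_le hx.2.le).mpr hG₂int
  -- rewrite p
  have hrw : ∀ u ∈ Set.Ioo (0:ℝ) M,
      p u = Real.exp (H u) * ((∫ y in u..M, G₁ y) + ∫ y in u..M, G₂ y) := by
    intro u hu
    rw [hp_eq u hu, mul_add, ← intervalIntegral.integral_const_mul,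
      ← intervalIntegral.integral_const_mul]
    have hIuM : ∀ y ∈ Set.Ioo u M, y ∈ Set.Ioo (0:ℝ) M :=
      fun y hy => ⟨lt_trans hu.1 hy.1, hy.2⟩
    have hne1M : ∀ᵐ y : ℝ, y ≠ M := by
      have : (volume : Measure ℝ) {M} = 0 := measure_singleton M
      exact ae_iff.2 (by simpa using this)
    have haeu : ∀ᵐ y : ℝ, y ∈ Set.uIoc u M → y ∈ Set.Ioo u M := by
      filter_upwards [hne1M] with y hy1 hy
      rw [Set.uIoc_of_le hu.2.le] at hy
      exact ⟨hy.1, lt_of_le_of_ne hy.2 hy1⟩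
    congr 1
    · apply intervalIntegral.integral_congr_ae
      filter_upwards [haeu] with y hy hymem
      have hyo := hy hymem
      have hyM := hIuM y hyo
      rw [hHsub u hu y hyM]
      rw [hG₁def]
      simp only
      rw [neg_sub, Real.exp_sub, Real.exp_neg]
      ring
    · apply intervalIntegral.integral_congr_ae
      filter_upwards [haeu] with y hy hymem
      have hyo := hy hymem
      have hyM := hIuM y hyo
      rw [hHsub u hu y hyM]
      rw [hG₂def, hQdef]
      simp only
      rw [neg_sub, Real.exp_sub, Real.exp_neg]
      ring
  have hΦ₁ : HasDerivAt (fun u => ∫ y in u..M, G₁ y) (-G₁ x) x :=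
    intervalIntegral.integral_hasDerivAt_left hG₁ii
      ((hG₁cont.stronglyMeasurableAtFilter isOpen_Ioo) x hx)
      (hG₁cont.continuousAt (isOpen_Ioo.mem_nhds hx))
  have hΦ₂ : HasDerivAt (fun u => ∫ y in u..M, G₂ y) (-G₂ x) x :=
    intervalIntegral.integral_hasDerivAt_left hG₂ii
      ((hG₂cont.stronglyMeasurableAtFilter isOpen_Ioo) x hx)
      (hG₂cont.continuousAt (isOpen_Ioo.mem_nhds hx))
  have hE : HasDerivAt (fun u => Real.exp (H u)) (Real.exp (H x) * h' x) x :=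
    (hHderiv x hx).exp
  have hprod : HasDerivAt
      (fun u => Real.exp (H u) * ((∫ y in u..M, G₁ y) + ∫ y in u..M, G₂ y))
      (Real.exp (H x) * h' x * ((∫ y in x..M, G₁ y) + ∫ y in x..M, G₂ y)
        + Real.exp (H x) * (-G₁ x + -G₂ x)) x :=
    hE.mul (hΦ₁.add hΦ₂)
  have hpx : (∫ y in x..M, G₁ y) + (∫ y in x..M, G₂ y) = p x := by
    rw [hrw x hx, hHx, Real.exp_zero, one_mul]
  have hevent : p =ᶠ[nhds x] fun u => Real.exp (H u) * ((∫ y in u..M, G₁ y) + ∫ y in u..M, G₂ y) := by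
    filter_upwards [isOpen_Ioo.mem_nhds hx] with u hu
    exact hrw u hu
  have hpd : HasDerivAt p (h' x * p x + (-G₁ x + -G₂ x)) x := by
    have h1 := hprod.congr_of_eventuallyEq hevent
    have h2 : Real.exp (H x) * h' x * ((∫ y in x..M, G₁ y) + ∫ y in x..M, G₂ y)
        + Real.exp (H x) * (-G₁ x + -G₂ x) = h' x * p x + (-G₁ x + -G₂ x) := by
      rw [hpx, hHx, Real.exp_zero]
      ring
    rwa [h2] at h1
  refine ⟨hpd.differentiableAt, ?_⟩
  rw [hpd.deriv]
  have hQx : (∫ α in (0:ℝ)..1, q x α * p (α * x) * p ((1 - α) * x)) = Q x := rfl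
  rw [hQx]
  have hgx := hg_ne x hx
  simp only [hG₁def, hG₂def, hh'def, hHx, neg_zero, Real.exp_zero, mul_one]
  field_simp
  ring
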